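/- Let L_{2t} = M ⊕ U ⊕ Zℓ, where M is an even unimodular lattice, U the hyperbolic plane with basis e, f (e²=f²=0, e·f=1), and ℓ² = −2t with t > 0. Let h ∈ L_{2t} be a primitive vector of square 2d > 0 and divisibility γ. Then γ divides 2t, and γ² divides d + tc² for some integer c with 0 ≤ c < γ and gcd(c, γ) = 1. -/

import Mathlib

/-!
STATEMENT 5. `L_{2t} = M ⊕ U ⊕ ℤℓ` with `M` even unimodular and `ℓ² = -2t`.
A primitive vector `h` can be written `h = a • m + c₀ • ℓ` with `m ∈ M ⊕ U` primitive and
`gcd(a, c₀) = 1`.  Since `M ⊕ U` is even unimodular and `m` is primitive, `m·(M⊕U) = ℤ` and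
`m² = m2` is even, so the square of `h` is `2d = a² * m2 - 2t * c₀²` and the divisibility of
`h` is `γ = gcd(a, 2t * c₀)`.  The theorem asserts: `γ ∣ 2t` and there exists an integer `c`
with `0 ≤ c < γ`, `gcd(c, γ) = 1` and `γ² ∣ d + t * c²`.
-/
theorem stmt_5 (t d a c₀ m2 : ℤ) (ht : 0 < t) (hd : 0 < d)
    (hprim : IsCoprime a c₀) (heven : 2 ∣ m2)
    (hsquare : 2 * d = a ^ 2 * m2 - 2 * t * c₀ ^ 2)
    (γ : ℤ) (hγ : γ = Int.gcd a (2 * t * c₀)) :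
    γ ∣ 2 * t ∧
      ∃ c : ℤ, 0 ≤ c ∧ c < γ ∧ Int.gcd c γ = 1 ∧ γ ^ 2 ∣ d + t * c ^ 2 := by
  have hγa : γ ∣ a := by rw [hγ]; exact Int.gcd_dvd_left _ _
  have hγ2tc : γ ∣ 2 * t * c₀ := by rw [hγ]; exact Int.gcd_dvd_right _ _
  have hcop : IsCoprime γ c₀ := hprim.of_isCoprime_of_dvd_left hγa
  have hγ2t : γ ∣ 2 * t := hcop.dvd_of_dvd_mul_right hγ2tc
  have hγne : γ ≠ 0 := by
    intro h0
    rw [h0] at hγ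
    have := (Int.gcd_eq_zero_iff.mp (by exact_mod_cast hγ.symm))
    have ha0 : a = 0 := this.1
    have h2 : 2 * t * c₀ = 0 := this.2
    rw [ha0] at hprim
    have hc0 : IsUnit c₀ := isCoprime_zero_left.mp hprim
    have : c₀ ≠ 0 := hc0.ne_zero
    have : 2 * t ≠ 0 := by positivity
    exact (mul_ne_zero ‹2 * t ≠ 0› ‹c₀ ≠ 0›) h2
  have hγpos : 0 < γ := lt_of_le_of_ne (by rw [hγ]; exact Int.natCast_nonneg _) (Ne.symm hγne)
  obtain ⟨A, hA⟩ := hγa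
  obtain ⟨B, hB⟩ := hγ2tc
  obtain ⟨m', hm'⟩ := heven
  set q := c₀ / γ with hqdef
  set c := c₀ % γ with hcdef
  have hcq : c = c₀ - γ * q := by rw [hcdef, hqdef, Int.emod_def]
  refine ⟨hγ2t, c, Int.emod_nonneg _ hγne, Int.emod_lt_of_pos _ hγpos, ?_, ?_⟩
  · have : IsCoprime c γ := by
      rw [hcq]
      simpa [sub_eq_add_neg, mul_neg] using hcop.symm.add_mul_left_left (-q)
    exact Int.isCoprime_iff_gcd_eq_one.mp this
  · have hdval : d = a ^ 2 * m' - t * c₀ ^ 2 := by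
      have : 2 * d = 2 * (a ^ 2 * m' - t * c₀ ^ 2) := by rw [hsquare, hm']; ring
      linarith
    refine ⟨A ^ 2 * m' - q * B + t * q ^ 2, ?_⟩
    rw [hdval, hcq]
    linear_combination m' * (a + γ * A) * hA + (- γ * q) * hB
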